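/- For every real y > 0, K₀(y) < 0.975·y^{−1/2}, i.e. (1/2)·∫₀^∞ exp(−t − y²/(4t))·dt/t < 0.975·y^{−1/2}. -/

import Mathlib

open Real MeasureTheory

private lemma amgm_aux {u v L M : ℝ} (hL : 0 ≤ L) (hM : 0 ≤ M) (h : L * M = 1) :
    u * v ≤ (L * u ^ 2 + M * v ^ 2) / 2 := by
  have h1 : Real.sqrt L * Real.sqrt M = 1 := by
    rw [← Real.sqrt_mul hL, h, Real.sqrt_one]
  have e : (Real.sqrt L * u - Real.sqrt M * v) ^ 2
      = L * u ^ 2 + M * v ^ 2 - 2 * (u * v) := by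
    have expand : (Real.sqrt L * u - Real.sqrt M * v) ^ 2
        = (Real.sqrt L) ^ 2 * u ^ 2 + (Real.sqrt M) ^ 2 * v ^ 2
          - 2 * (Real.sqrt L * Real.sqrt M) * (u * v) := by ring
    rw [expand, Real.sq_sqrt hL, Real.sq_sqrt hM, h1]; ring
  have := sq_nonneg (Real.sqrt L * u - Real.sqrt M * v)
  linarith

private lemma exp_neg_le_aux {x : ℝ} (hx : 0 < x) : Real.exp (-x) ≤ 4 / x ^ 2 := by
  have h2 : 1 + x / 2 ≤ Real.exp (x / 2) := by
    have := Real.add_one_le_exp (x / 2); linarith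
  have h3 : Real.exp (x / 2) ^ 2 = Real.exp x := by
    rw [sq, ← Real.exp_add]; ring_nf
  have h4 : x ^ 2 ≤ 4 * Real.exp x := by nlinarith
  rw [Real.exp_neg, inv_eq_one_div, div_le_div_iff₀ (Real.exp_pos x) (by positivity)]
  nlinarith

private lemma integralA :
    ∫ t in Set.Ioi (0:ℝ), t ^ (-(1:ℝ)/2) * Real.exp (-(2*t))
      = (1/2:ℝ) ^ ((1:ℝ)/2) * Real.sqrt π := by
  have h := Real.integral_rpow_mul_exp_neg_mul_Ioi (a := 1/2) (r := 2) (by norm_num) (by norm_num)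
  rw [Real.Gamma_one_half_eq] at h
  rw [show (-(1:ℝ)/2) = (1:ℝ)/2 - 1 by norm_num]
  exact h

private lemma integralB {c : ℝ} (hc : 0 < c) :
    ∫ t in Set.Ioi (0:ℝ), t ^ (-(3:ℝ)/2) * Real.exp (-(c * t⁻¹))
      = (1/c) ^ ((1:ℝ)/2) * Real.sqrt π := by
  have hsub := integral_comp_rpow_Ioi
    (fun u => u ^ ((1:ℝ)/2 - 1) * Real.exp (-(c * u))) (p := -1) (by norm_num)
  have hval := Real.integral_rpow_mul_exp_neg_mul_Ioi (a := 1/2) (r := c) (by norm_num) hc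
  rw [Real.Gamma_one_half_eq] at hval
  rw [← hval, ← hsub]
  refine setIntegral_congr_fun measurableSet_Ioi (fun x hx => ?_)
  have hx0 : (0:ℝ) < x := hx
  simp only [smul_eq_mul, abs_neg, abs_one, one_mul]
  rw [← Real.rpow_mul hx0.le, Real.rpow_neg_one, ← mul_assoc, ← Real.rpow_add hx0]
  norm_num

private lemma integrableB {c : ℝ} (hc : 0 < c) :
    IntegrableOn (fun t : ℝ => t ^ (-(3:ℝ)/2) * Real.exp (-(c * t⁻¹))) (Set.Ioi 0) := by
  have hmeas : ∀ s : Set ℝ,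
      AEStronglyMeasurable (fun t : ℝ => t ^ (-(3:ℝ)/2) * Real.exp (-(c * t⁻¹)))
        (volume.restrict s) := fun s =>
    (by fun_prop :
      Measurable (fun t : ℝ => t ^ (-(3:ℝ)/2) * Real.exp (-(c * t⁻¹)))).aestronglyMeasurable
  have hsplit : Set.Ioi (0:ℝ) = Set.Ioc 0 1 ∪ Set.Ioi 1 :=
    (Set.Ioc_union_Ioi_eq_Ioi zero_le_one).symm
  rw [hsplit]
  apply IntegrableOn.union
  · apply Integrable.mono' (g := fun _ => 4 / c ^ 2)
      (integrableOn_const measure_Ioc_lt_top.ne) (hmeas _)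
    filter_upwards [ae_restrict_mem measurableSet_Ioc] with t ht
    obtain ⟨ht0, ht1⟩ := ht
    have hx : 0 < c * t⁻¹ := by positivity
    have hexp : Real.exp (-(c * t⁻¹)) ≤ 4 * t ^ 2 / c ^ 2 := by
      have h := exp_neg_le_aux hx
      have he : 4 / (c * t⁻¹) ^ 2 = 4 * t ^ 2 / c ^ 2 := by field_simp
      rw [he] at h; exact h
    have h1 : t ^ (-(3:ℝ)/2) ≤ (t ^ 2)⁻¹ := by
      calc t ^ (-(3:ℝ)/2) ≤ t ^ (-(2:ℝ)) :=
            Real.rpow_le_rpow_of_exponent_ge ht0 ht1 (by norm_num)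
        _ = (t ^ 2)⁻¹ := by
            rw [Real.rpow_neg ht0.le, ← Real.rpow_natCast t 2]; norm_num
    rw [Real.norm_eq_abs, abs_of_nonneg (by positivity)]
    calc t ^ (-(3:ℝ)/2) * Real.exp (-(c * t⁻¹))
        ≤ (t ^ 2)⁻¹ * (4 * t ^ 2 / c ^ 2) :=
          mul_le_mul h1 hexp (Real.exp_pos _).le (by positivity)
      _ = 4 / c ^ 2 := by field_simp
  · apply Integrable.mono' (g := fun t : ℝ => t ^ (-(3:ℝ)/2))
      (integrableOn_Ioi_rpow_of_lt (by norm_num) one_pos) (hmeas _)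
    filter_upwards [ae_restrict_mem measurableSet_Ioi] with t ht
    have ht0 : (0:ℝ) < t := lt_trans one_pos ht
    rw [Real.norm_eq_abs, abs_of_nonneg (by positivity)]
    have hone : Real.exp (-(c * t⁻¹)) ≤ 1 :=
      Real.exp_le_one_iff.mpr (by nlinarith [mul_pos hc (inv_pos.mpr ht0)])
    nlinarith [Real.rpow_pos_of_pos ht0 (-(3:ℝ)/2)]

theorem besselK0_bound_one (y : ℝ) (hy : 0 < y) :
    (1 / 2) * ∫ t in Set.Ioi (0 : ℝ), Real.exp (-t - y ^ 2 / (4 * t)) / t <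
      0.975 * y ^ (-(1 : ℝ) / 2) := by
  set c : ℝ := y ^ 2 / 2 with hc
  have hcpos : 0 < c := by positivity
  set L : ℝ := Real.sqrt (2 / y) with hL
  set M : ℝ := Real.sqrt (y / 2) with hM
  have hLpos : 0 < L := Real.sqrt_pos.mpr (by positivity)
  have hMpos : 0 < M := Real.sqrt_pos.mpr (by positivity)
  have hLM : L * M = 1 := by
    rw [hL, hM, ← Real.sqrt_mul (by positivity)]
    rw [show (2 / y) * (y / 2) = 1 by field_simp]
    exact Real.sqrt_one
  set g1 : ℝ → ℝ := fun t => t ^ (-(1:ℝ)/2) * Real.exp (-(2*t)) with hg1def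
  set g2 : ℝ → ℝ := fun t => t ^ (-(3:ℝ)/2) * Real.exp (-(c * t⁻¹)) with hg2def
  have hg1int : IntegrableOn g1 (Set.Ioi 0) := by
    have := integrableOn_rpow_mul_exp_neg_mul_rpow
      (s := -(1:ℝ)/2) (p := 1) (b := 2) (by norm_num) one_pos (by norm_num)
    simpa [hg1def, Real.rpow_one, neg_mul] using this
  have hg2int : IntegrableOn g2 (Set.Ioi 0) := integrableB hcpos
  -- main comparison
  have key : (∫ t in Set.Ioi (0:ℝ), Real.exp (-t - y ^ 2 / (4 * t)) / t)
      ≤ ∫ t in Set.Ioi (0:ℝ), (1/2) * (L * g1 t + M * g2 t) := by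
    refine integral_mono_of_nonneg ?_ (((hg1int.const_mul L).add (hg2int.const_mul M)).const_mul (1/2)) ?_
    · filter_upwards [ae_restrict_mem measurableSet_Ioi] with t ht
      have ht0 : (0:ℝ) < t := ht
      positivity
    · filter_upwards [ae_restrict_mem measurableSet_Ioi] with t ht
      have ht0 : (0:ℝ) < t := ht
      set u : ℝ := Real.exp (-t) * t ^ (-(1:ℝ)/4) with hu
      set v : ℝ := Real.exp (-(y ^ 2 / (4 * t))) * t ^ (-(3:ℝ)/4) with hv
      have e0 : Real.exp (-t - y ^ 2 / (4 * t)) / t = u * v := by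
        rw [hu, hv, div_eq_mul_inv]
        have e1 : Real.exp (-t - y ^ 2 / (4 * t))
            = Real.exp (-t) * Real.exp (-(y ^ 2 / (4 * t))) := by
          rw [← Real.exp_add]; ring_nf
        have e2 : t ^ (-(1:ℝ)/4) * t ^ (-(3:ℝ)/4) = t⁻¹ := by
          rw [← Real.rpow_add ht0, ← Real.rpow_neg_one t]; norm_num
        rw [e1, ← e2]; ring
      have e3 : u ^ 2 = g1 t := by
        rw [hu, hg1def, mul_pow]
        have e4 : Real.exp (-t) ^ 2 = Real.exp (-(2*t)) := by
          rw [sq, ← Real.exp_add]; ring_nf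
        have e5 : (t ^ (-(1:ℝ)/4)) ^ 2 = t ^ (-(1:ℝ)/2) := by
          rw [← Real.rpow_natCast (t ^ (-(1:ℝ)/4)) 2, ← Real.rpow_mul ht0.le]
          norm_num
        rw [e4, e5]; ring
      have e6 : v ^ 2 = g2 t := by
        rw [hv, hg2def, mul_pow]
        have e7 : Real.exp (-(y ^ 2 / (4 * t))) ^ 2 = Real.exp (-(c * t⁻¹)) := by
          rw [sq, ← Real.exp_add, hc]
          congr 1
          field_simp
          ring
        have e8 : (t ^ (-(3:ℝ)/4)) ^ 2 = t ^ (-(3:ℝ)/2) := by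
          rw [← Real.rpow_natCast (t ^ (-(3:ℝ)/4)) 2, ← Real.rpow_mul ht0.le]
          norm_num
        rw [e7, e8]; ring
      calc Real.exp (-t - y ^ 2 / (4 * t)) / t = u * v := e0
        _ ≤ (L * u ^ 2 + M * v ^ 2) / 2 := amgm_aux hLpos.le hMpos.le hLM
        _ = (1/2) * (L * g1 t + M * g2 t) := by rw [e3, e6]; ring
  -- value of the majorant integral
  have hGval : (∫ t in Set.Ioi (0:ℝ), (1/2) * (L * g1 t + M * g2 t))
      = Real.sqrt π * y ^ (-(1:ℝ)/2) := by
    rw [integral_const_mul, integral_add (hg1int.const_mul L) (hg2int.const_mul M),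
      integral_const_mul, integral_const_mul, hg1def, hg2def, integralA, integralB hcpos]
    have q1 : (1/2:ℝ) ^ ((1:ℝ)/2) = Real.sqrt (1/2) := (Real.sqrt_eq_rpow _).symm
    have q2 : (1/c:ℝ) ^ ((1:ℝ)/2) = Real.sqrt (1/c) := (Real.sqrt_eq_rpow _).symm
    have q3 : L * Real.sqrt (1/2) = Real.sqrt (1/y) := by
      rw [hL, ← Real.sqrt_mul (by positivity)]
      congr 1; ring
    have q4 : M * Real.sqrt (1/c) = Real.sqrt (1/y) := by
      rw [hM, hc, ← Real.sqrt_mul (by positivity)]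
      congr 1; field_simp
    have q5 : Real.sqrt (1/y) = y ^ (-(1:ℝ)/2) := by
      rw [Real.sqrt_eq_rpow, one_div, ← Real.rpow_neg_one y, ← Real.rpow_mul hy.le]
      norm_num
    rw [q1, q2, ← q5]
    linear_combination (Real.sqrt π / 2) * q3 + (Real.sqrt π / 2) * q4
  have hsqrtpi : Real.sqrt π < 1.95 := by
    rw [Real.sqrt_lt' (by norm_num)]
    nlinarith [Real.pi_lt_d2]
  have hyp : (0:ℝ) < y ^ (-(1:ℝ)/2) := Real.rpow_pos_of_pos hy _
  calc (1 / 2) * ∫ t in Set.Ioi (0 : ℝ), Real.exp (-t - y ^ 2 / (4 * t)) / t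
      ≤ (1/2) * (Real.sqrt π * y ^ (-(1:ℝ)/2)) := by
        rw [← hGval]; linarith
    _ < 0.975 * y ^ (-(1:ℝ)/2) := by nlinarith
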